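/- For coprime odd integers p, q with 2 ≤ p < q, the (q-1) × (q-1) matrix M with entries M_{i,j} = (-1)^{i+j+1} sin(ijpπ/q) (for 1 ≤ i,j ≤ q-1) satisfies MᵀM = (q/2)·I; in particular M is invertible. -/

import Mathlib

open Real Matrix Finset
lemma sin_mul_sin' (u v : ℝ) :
    Real.sin u * Real.sin v = (Real.cos (u - v) - Real.cos (u + v)) / 2 := by
  rw [Real.cos_sub_cos]
  have e1 : (u - v + (u + v)) / 2 = u := by ring
  have e2 : (u - v - (u + v)) / 2 = -v := by ring
  rw [e1, e2, Real.sin_neg]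
  ring

lemma tele (q : ℕ) (θ : ℝ) :
    (∑ k ∈ range q, Real.cos (k * θ)) * (2 * Real.sin (θ / 2)) =
      Real.sin (q * θ - θ / 2) + Real.sin (θ / 2) := by
  rw [Finset.sum_mul]
  have h : ∀ k ∈ range q, Real.cos (k * θ) * (2 * Real.sin (θ / 2)) =
      (fun k : ℕ => Real.sin (k * θ - θ / 2)) (k + 1)
        - (fun k : ℕ => Real.sin (k * θ - θ / 2)) k := by
    intro k _
    simp only []
    rw [Real.sin_sub_sin]
    push_cast
    have e1 : (((k:ℝ) + 1) * θ - θ / 2 - ((k:ℝ) * θ - θ / 2)) / 2 = θ / 2 := by ring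
    have e2 : (((k:ℝ) + 1) * θ - θ / 2 + ((k:ℝ) * θ - θ / 2)) / 2 = (k:ℝ) * θ := by ring
    rw [e1, e2]
    ring
  rw [Finset.sum_congr rfl h, Finset.sum_range_sub (fun k : ℕ => Real.sin (k * θ - θ / 2))]
  simp [Real.sin_neg]


lemma cosSum (q : ℕ) (hq0 : 0 < q) (n : ℤ) :
    ∑ k ∈ range q, Real.cos (π * n * k / q) =
      if (2 * (q:ℤ)) ∣ n then (q:ℝ) else if (2:ℤ) ∣ n then 0 else 1 := by
  have hqR : (q:ℝ) ≠ 0 := Nat.cast_ne_zero.mpr hq0.ne'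
  by_cases h2q : (2 * (q:ℤ)) ∣ n
  · obtain ⟨m, hm⟩ := h2q
    rw [if_pos ⟨m, hm⟩]
    have : ∀ k ∈ range q, Real.cos (π * n * k / q) = 1 := by
      intro k _
      have e : π * n * k / q = ((m * k : ℤ) : ℝ) * (2 * π) := by
        subst hm; push_cast; field_simp
      rw [e, Real.cos_int_mul_two_pi]
    rw [Finset.sum_congr rfl this, Finset.sum_const, card_range]
    simp
  · rw [if_neg h2q]
    set θ : ℝ := π * n / q with hθ
    have hsin : Real.sin (θ / 2) ≠ 0 := by
      intro h
      rw [Real.sin_eq_zero_iff] at h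
      obtain ⟨m, hm⟩ := h
      apply h2q
      refine ⟨m, ?_⟩
      have h4 : π * (2 * (q:ℝ) * m) = π * n := by
        have e : π * (2 * (q:ℝ) * m) = ((m:ℝ) * π) * (2 * q) := by ring
        rw [e, hm, hθ]
        rw [div_div, div_mul_eq_mul_div, mul_div_assoc]
        rw [show (2 * (q:ℝ)) / ((q:ℝ) * 2) = 1 by
          rw [mul_comm]; exact div_self (by positivity), mul_one]
      have h5 : (2 * (q:ℝ) * m) = n := mul_left_cancel₀ Real.pi_ne_zero h4
      exact_mod_cast h5.symm
    have ht := tele q θ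
    have hterm : ∀ k ∈ range q, Real.cos (π * n * k / q) = Real.cos (k * θ) := by
      intro k _
      congr 1
      rw [hθ]; ring
    rw [Finset.sum_congr rfl hterm]
    have hqθ : (q:ℝ) * θ = n * π := by rw [hθ]; field_simp
    rw [hqθ, Real.sin_sub, Real.sin_int_mul_pi, zero_mul, zero_sub] at ht
    rcases Int.even_or_odd n with he | ho
    · rw [if_pos he.two_dvd]
      obtain ⟨m, hm⟩ := he
      have hc : Real.cos ((n:ℝ) * π) = 1 := by
        have : (n:ℝ) * π = (m:ℤ) * (2 * π) := by subst hm; push_cast; ring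
        rw [this, Real.cos_int_mul_two_pi]
      rw [hc] at ht
      have : (∑ k ∈ range q, Real.cos (k * θ)) * (2 * Real.sin (θ / 2)) = 0 := by
        rw [ht]; ring
      rcases mul_eq_zero.mp this with h | h
      · exact h
      · rcases mul_eq_zero.mp h with h' | h'
        · norm_num at h'
        · exact absurd h' hsin
    · obtain ⟨m, hm⟩ := ho
      rw [if_neg (by rintro ⟨c, hc⟩; omega)]
      have hc : Real.cos ((n:ℝ) * π) = -1 := by
        have e : (n:ℝ) * π = (m:ℤ) * (2 * π) + π := by subst hm; push_cast; ring
        have e2 : ((m:ℝ)) * (2 * π) = ((2 * m : ℤ) : ℝ) * π := by push_cast; ring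
        rw [e, Real.cos_add, Real.cos_int_mul_two_pi, e2, Real.sin_int_mul_pi]
        norm_num [Real.cos_pi]
      rw [hc] at ht
      have h1 : (∑ k ∈ range q, Real.cos (k * θ)) * (2 * Real.sin (θ / 2)) =
          1 * (2 * Real.sin (θ / 2)) := by rw [ht]; ring
      have h2 : (2 * Real.sin (θ / 2)) ≠ 0 := by
        intro h; rcases mul_eq_zero.mp h with h | h
        · norm_num at h
        · exact hsin h
      exact mul_right_cancel₀ h2 h1

lemma TSum (q : ℕ) (hq0 : 0 < q) (n : ℤ) :
    ∑ k ∈ range (q - 1), Real.cos (π * n * ((k : ℝ) + 1) / q) =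
      (if (2 * (q:ℤ)) ∣ n then (q:ℝ) else if (2:ℤ) ∣ n then 0 else 1) - 1 := by
  have h := cosSum q hq0 n
  have hq' : q - 1 + 1 = q := Nat.succ_pred_eq_of_pos hq0
  rw [← h]
  have e : ∑ k ∈ range q, Real.cos (π * n * k / q)
      = ∑ k ∈ range (q - 1), Real.cos (π * n * ((k : ℕ) + 1 : ℕ) / q)
        + Real.cos (π * n * ((0 : ℕ) : ℝ) / q) := by
    rw [← Finset.sum_range_succ' (fun k : ℕ => Real.cos (π * n * k / q)) (q - 1), hq']
  rw [e]
  push_cast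
  norm_num

theorem stmt_2 (p q : ℕ) (hcop : Nat.Coprime p q) (hp : 2 ≤ p) (hpq : p < q)
    (hpo : Odd p) (hqo : Odd q)
    (M : Matrix (Fin (q - 1)) (Fin (q - 1)) ℝ)
    (hM : ∀ i j : Fin (q - 1),
      M i j = (-1 : ℝ) ^ (((i : ℕ) + 1) + ((j : ℕ) + 1) + 1) *
        Real.sin ((((i : ℕ) + 1) : ℝ) * (((j : ℕ) + 1) : ℝ) * p * Real.pi / q)) :
    Mᵀ * M = ((q : ℝ) / 2) • 1 ∧ IsUnit M := by
  have hq0 : 0 < q := by omega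
  have hq3 : 3 ≤ q := by
    rcases hqo with ⟨m, hm⟩; omega
  have hcop2 : IsCoprime (p:ℤ) (2 * (q:ℤ)) := by
    have h2 : Nat.Coprime p 2 := by
      refine Nat.Coprime.symm ((Nat.prime_two.coprime_iff_not_dvd).mpr ?_)
      rintro ⟨c, hc⟩
      rcases hpo with ⟨m, hm⟩
      omega
    have h3 : Nat.Coprime p (2 * q) := Nat.Coprime.mul_right h2 hcop
    have h4 := Nat.isCoprime_iff_coprime.mpr h3
    push_cast at h4
    exact h4
  have main : Mᵀ * M = ((q : ℝ) / 2) • 1 := by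
    ext i j
    rw [Matrix.mul_apply]
    simp only [Matrix.transpose_apply]
    have hia : (i:ℕ) < q - 1 := i.isLt
    have hjb : (j:ℕ) < q - 1 := j.isLt
    set n1 : ℤ := (p:ℤ) * ((((i:ℕ):ℤ) + 1) - (((j:ℕ):ℤ) + 1)) with hn1
    set n2 : ℤ := (p:ℤ) * ((((i:ℕ):ℤ) + 1) + (((j:ℕ):ℤ) + 1)) with hn2
    have hterm : ∀ k : Fin (q-1), M k i * M k j =
        (-1:ℝ)^(((i:ℕ)+1)+((j:ℕ)+1)) * ((Real.cos (π * (n1:ℝ) * (((k:ℕ):ℝ)+1) / q)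
          - Real.cos (π * (n2:ℝ) * (((k:ℕ):ℝ)+1) / q)) / 2) := by
      intro k
      have hpow : (-1:ℝ)^(((k:ℕ)+1)+((i:ℕ)+1)+1) * (-1:ℝ)^(((k:ℕ)+1)+((j:ℕ)+1)+1)
          = (-1:ℝ)^(((i:ℕ)+1)+((j:ℕ)+1)) := by
        rw [← pow_add]
        have e : ((k:ℕ)+1)+((i:ℕ)+1)+1+(((k:ℕ)+1)+((j:ℕ)+1)+1)
            = (((i:ℕ)+1)+((j:ℕ)+1)) + 2*((k:ℕ)+2) := by ring
        rw [e, pow_add, pow_mul, neg_one_sq, one_pow, mul_one]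
      have e1 : ((((k:ℕ):ℝ)+1) * (((i:ℕ):ℝ)+1) * p * π / q)
          - ((((k:ℕ):ℝ)+1) * (((j:ℕ):ℝ)+1) * p * π / q)
          = π * (n1:ℝ) * (((k:ℕ):ℝ)+1) / q := by
        rw [hn1]; push_cast; ring
      have e2 : ((((k:ℕ):ℝ)+1) * (((i:ℕ):ℝ)+1) * p * π / q)
          + ((((k:ℕ):ℝ)+1) * (((j:ℕ):ℝ)+1) * p * π / q)
          = π * (n2:ℝ) * (((k:ℕ):ℝ)+1) / q := by
        rw [hn2]; push_cast; ring
      rw [hM k i, hM k j, mul_mul_mul_comm, hpow, sin_mul_sin', e1, e2]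
    rw [Finset.sum_congr rfl (fun k _ => hterm k), ← Finset.mul_sum]
    have hsplit : ∑ k : Fin (q-1), ((Real.cos (π * (n1:ℝ) * (((k:ℕ):ℝ)+1) / q)
          - Real.cos (π * (n2:ℝ) * (((k:ℕ):ℝ)+1) / q)) / 2)
        = ((∑ k ∈ range (q-1), Real.cos (π * (n1:ℝ) * ((k:ℝ)+1) / q))
          - (∑ k ∈ range (q-1), Real.cos (π * (n2:ℝ) * ((k:ℝ)+1) / q))) / 2 := by
      rw [Fin.sum_univ_eq_sum_range (fun k : ℕ => ((Real.cos (π * (n1:ℝ) * ((k:ℝ)+1) / q)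
          - Real.cos (π * (n2:ℝ) * ((k:ℝ)+1) / q)) / 2)), ← Finset.sum_div,
        Finset.sum_sub_distrib]
    rw [hsplit, TSum q hq0 n1, TSum q hq0 n2]
    have hn2notdvd : ¬ (2 * (q:ℤ)) ∣ n2 := by
      intro hdvd
      have h1 : (2 * (q:ℤ)) ∣ ((((i:ℕ):ℤ) + 1) + (((j:ℕ):ℤ) + 1)) :=
        IsCoprime.dvd_of_dvd_mul_left (IsCoprime.symm hcop2) (by rwa [hn2] at hdvd)
      have h2 : (0:ℤ) < (((i:ℕ):ℤ) + 1) + (((j:ℕ):ℤ) + 1) := by positivity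
      have h3 := Int.le_of_dvd h2 h1
      omega
    by_cases hij : i = j
    · subst hij
      have hn1z : n1 = 0 := by rw [hn1]; ring
      have h2d : (2:ℤ) ∣ n2 := ⟨(p:ℤ) * (((i:ℕ):ℤ)+1), by rw [hn2]; ring⟩
      rw [if_pos (hn1z ▸ dvd_zero (2 * (q:ℤ))), if_neg hn2notdvd, if_pos h2d]
      have heven : Even (((i:ℕ)+1)+((i:ℕ)+1)) := ⟨(i:ℕ)+1, rfl⟩
      rw [Even.neg_one_pow heven]
      simp [Matrix.one_apply]
    · have hab : (((i:ℕ):ℤ)+1) ≠ (((j:ℕ):ℤ)+1) := by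
        intro h
        exact hij (Fin.ext (by omega))
      have hn1notdvd : ¬ (2 * (q:ℤ)) ∣ n1 := by
        intro hdvd
        have h1 : (2 * (q:ℤ)) ∣ ((((i:ℕ):ℤ) + 1) - (((j:ℕ):ℤ) + 1)) :=
          IsCoprime.dvd_of_dvd_mul_left (IsCoprime.symm hcop2) (by rwa [hn1] at hdvd)
        have h2 : (0:ℤ) < |(((i:ℕ):ℤ) + 1) - (((j:ℕ):ℤ) + 1)| :=
          abs_pos.mpr (sub_ne_zero.mpr hab)
        have h3 := Int.le_of_dvd h2 ((dvd_abs _ _).mpr h1)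
        have h4 : |(((i:ℕ):ℤ) + 1) - (((j:ℕ):ℤ) + 1)| ≤ (q:ℤ) - 2 := by
          rw [abs_le]
          omega
        omega
      have hpar : ((2:ℤ) ∣ n1) ↔ ((2:ℤ) ∣ n2) := by
        have hd : n2 - n1 = 2 * ((p:ℤ) * (((j:ℕ):ℤ)+1)) := by rw [hn1, hn2]; ring
        constructor <;> intro h <;> omega
      rw [if_neg hn1notdvd, if_neg hn2notdvd]
      have hz : (if (2:ℤ) ∣ n1 then (0:ℝ) else 1) = (if (2:ℤ) ∣ n2 then (0:ℝ) else 1) := by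
        by_cases h : (2:ℤ) ∣ n1
        · rw [if_pos h, if_pos (hpar.mp h)]
        · rw [if_neg h, if_neg (fun hh => h (hpar.mpr hh))]
      rw [hz]
      simp [Matrix.one_apply, hij]
  refine ⟨main, ?_⟩
  have hinv : ((2/(q:ℝ)) • Mᵀ) * M = 1 := by
    rw [Matrix.smul_mul, main, smul_smul,
      show (2/(q:ℝ)) * ((q:ℝ)/2) = 1 by
        field_simp,
      one_smul]
  have : Invertible M := invertibleOfLeftInverse M _ hinv
  exact isUnit_of_invertible M
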